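/- Let K be a field, r ≥ 1, and a : ℕʳ → K an r-sequence such that for each 1 ≤ i ≤ r the K-linear span of the shifts {S_iⁿ a : n ∈ ℕ} inside K^(ℕʳ) is finite-dimensional. Then there exist a polynomial P ∈ K[t₁,…,t_r] and single-variable polynomials Q₁(t₁),…,Q_r(t_r), each with nonzero constant term, such that H_a · Q₁(t₁)⋯Q_r(t_r) = P in K[[t₁,…,t_r]]. -/

import Mathlib

/-- The Hilbert series of an `r`-sequence `a : ℕʳ → K`, i.e. the multivariate formal
power series `Σ_{n ∈ ℕʳ} a(n)·t₁^{n₁}⋯t_r^{n_r}`. -/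
def hilbertSeries {K : Type*} [Field K] {r : ℕ} (a : (Fin r → ℕ) → K) :
    MvPowerSeries (Fin r) K :=
  fun d => a d

/-- The shift `Sᵐa` of an `r`-sequence `a : ℕʳ → K` by `m ∈ ℕʳ`: `n ↦ a (n + m)`. -/
def mshift {K : Type*} [Field K] {r : ℕ} (a : (Fin r → ℕ) → K) (m : Fin r → ℕ) :
    (Fin r → ℕ) → K :=
  fun n => a (n + m)

section Aux


variable {K : Type*} [Field K] {r : ℕ}

lemma exists_recurrence (a : (Fin r → ℕ) → K) (i : Fin r)
    (hfd : FiniteDimensional K (Submodule.span K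
      (Set.range fun n : ℕ => mshift a (Pi.single i n)))) :
    ∃ q : Polynomial K, q ≠ 0 ∧
      ∀ m : Fin r → ℕ,
        ∑ k ∈ Finset.range (q.natDegree + 1), q.coeff k * a (m + Pi.single i k) = 0 := by
  classical
  set v : ℕ → ((Fin r → ℕ) → K) := fun n => mshift a (Pi.single i n) with hv
  have hnli : ¬ LinearIndependent K v := by
    intro hli
    have hw : LinearIndependent K (fun n : ℕ =>
        (⟨v n, Submodule.subset_span (Set.mem_range_self n)⟩ :
          Submodule.span K (Set.range v))) :=
      LinearIndependent.of_comp (Submodule.span K (Set.range v)).subtype hli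
    exact Module.Finite.not_linearIndependent_of_infinite _ hw
  rw [linearIndependent_iff] at hnli
  push_neg at hnli
  obtain ⟨l, hl0, hlne⟩ := hnli
  refine ⟨⟨AddMonoidAlgebra.ofCoeff l⟩, by simpa using hlne, fun m => ?_⟩
  have hcoeff : ∀ k, (⟨AddMonoidAlgebra.ofCoeff l⟩ : Polynomial K).coeff k = l k := fun _ => rfl
  have hsupp : l.support ⊆ Finset.range ((⟨AddMonoidAlgebra.ofCoeff l⟩ : Polynomial K).natDegree + 1) := by
    intro k hk
    rw [Finset.mem_range, Nat.lt_succ_iff]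
    exact Polynomial.le_natDegree_of_ne_zero
      (by rw [hcoeff]; exact Finsupp.mem_support_iff.mp hk)
  rw [Finsupp.linearCombination_apply] at hl0
  have h0 := congrFun hl0 m
  rw [Finsupp.sum, Finset.sum_apply] at h0
  have h0' : ∑ n ∈ l.support, l n * a (m + Pi.single i n) = 0 := by
    simpa [hv, mshift] using h0
  rw [← h0']
  refine (Finset.sum_subset hsupp fun k _ hk => ?_).symm
  rw [hcoeff, Finsupp.notMem_support_iff.mp hk, zero_mul]

lemma coeff_mul_aeval (φ : MvPowerSeries (Fin r) K) (i : Fin r) (Q : Polynomial K)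
    (n : Fin r →₀ ℕ) :
    MvPowerSeries.coeff n (φ * ((Polynomial.aeval (MvPolynomial.X i) Q :
        MvPolynomial (Fin r) K) : MvPowerSeries (Fin r) K)) =
      ∑ k ∈ Finset.range (n i + 1),
        Q.coeff k * MvPowerSeries.coeff (n - Finsupp.single i k) φ := by
  classical
  have hpoly : (Polynomial.aeval (MvPolynomial.X i) Q : MvPolynomial (Fin r) K)
      = ∑ k ∈ Finset.range (Q.natDegree + 1),
          MvPolynomial.monomial (Finsupp.single i k) (Q.coeff k) := by
    rw [Polynomial.aeval_eq_sum_range]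
    refine Finset.sum_congr rfl fun k _ => ?_
    rw [MvPolynomial.smul_eq_C_mul, MvPolynomial.X_pow_eq_monomial,
      MvPolynomial.C_mul_monomial, mul_one]
  have hcoe : ((Polynomial.aeval (MvPolynomial.X i) Q : MvPolynomial (Fin r) K) :
      MvPowerSeries (Fin r) K)
      = ∑ k ∈ Finset.range (Q.natDegree + 1),
          MvPowerSeries.monomial (Finsupp.single i k) (Q.coeff k) := by
    rw [show ((Polynomial.aeval (MvPolynomial.X i) Q : MvPolynomial (Fin r) K) :
        MvPowerSeries (Fin r) K) = MvPolynomial.coeToMvPowerSeries.ringHom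
          (Polynomial.aeval (MvPolynomial.X i) Q : MvPolynomial (Fin r) K) from rfl,
      hpoly, map_sum]
    exact Finset.sum_congr rfl fun k _ => MvPolynomial.coe_monomial _ _
  rw [hcoe, Finset.mul_sum, map_sum]
  have h1 : ∀ k, MvPowerSeries.coeff n
      (φ * MvPowerSeries.monomial (Finsupp.single i k) (Q.coeff k))
      = Q.coeff k * (if k ≤ n i then MvPowerSeries.coeff (n - Finsupp.single i k) φ else 0) := by
    intro k
    rw [MvPowerSeries.coeff_mul_monomial]
    split_ifs with h h' h'
    · ring
    · exact absurd (Finsupp.single_le_iff.mp h) h'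
    · exact absurd (Finsupp.single_le_iff.mpr h') h
    · ring
  simp_rw [h1]
  set g : ℕ → K := fun k =>
    Q.coeff k * (if k ≤ n i then MvPowerSeries.coeff (n - Finsupp.single i k) φ else 0) with hg
  set M := max (Q.natDegree + 1) (n i + 1) with hM
  have e1 : ∑ k ∈ Finset.range (Q.natDegree + 1), g k = ∑ k ∈ Finset.range M, g k :=
    Finset.sum_subset (Finset.range_subset_range.2 (le_max_left _ _)) fun k _ hk => by
      rw [hg]
      simp only []
      rw [Polynomial.coeff_eq_zero_of_natDegree_lt (by
        rw [Finset.mem_range, not_lt] at hk; omega), zero_mul]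
  have e2 : ∑ k ∈ Finset.range (n i + 1),
      Q.coeff k * MvPowerSeries.coeff (n - Finsupp.single i k) φ = ∑ k ∈ Finset.range M, g k := by
    rw [← Finset.sum_subset (Finset.range_subset_range.2 (le_max_right _ _)) (fun k _ hk => by
      rw [hg]
      simp only []
      rw [if_neg (by rw [Finset.mem_range, not_lt] at hk; omega), mul_zero])]
    refine Finset.sum_congr rfl fun k hk => ?_
    rw [hg]
    simp only []
    rw [if_pos (by rw [Finset.mem_range] at hk; omega)]
  rw [e1, e2]

lemma key_induction (a : (Fin r → ℕ) → K) (q : Fin r → Polynomial K)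
    (hrec : ∀ (j : Fin r) (m : Fin r →₀ ℕ),
      ∑ k ∈ Finset.range ((q j).natDegree + 1),
        (q j).coeff k * MvPowerSeries.coeff (m + Finsupp.single j k) (hilbertSeries a) = 0)
    (s : Finset (Fin r)) :
    (∀ j ∉ s, ∀ m : Fin r →₀ ℕ,
      ∑ k ∈ Finset.range ((q j).natDegree + 1),
        (q j).coeff k * MvPowerSeries.coeff (m + Finsupp.single j k)
          (hilbertSeries a * ((∏ i ∈ s, Polynomial.aeval (MvPolynomial.X i) ((q i).reverse) :
            MvPolynomial (Fin r) K) : MvPowerSeries (Fin r) K)) = 0) ∧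
    (∀ n : Fin r →₀ ℕ, (∃ i ∈ s, (q i).natDegree < n i) →
      MvPowerSeries.coeff n
        (hilbertSeries a * ((∏ i ∈ s, Polynomial.aeval (MvPolynomial.X i) ((q i).reverse) :
          MvPolynomial (Fin r) K) : MvPowerSeries (Fin r) K)) = 0) := by
  classical
  induction s using Finset.induction_on with
  | empty =>
      constructor
      · intro j _ m
        simpa using hrec j m
      · intro n hn
        simp at hn
  | @insert i s hi ih =>
      have hΦ : hilbertSeries a *
            ((∏ i' ∈ insert i s, Polynomial.aeval (MvPolynomial.X i') ((q i').reverse) :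
              MvPolynomial (Fin r) K) : MvPowerSeries (Fin r) K)
          = (hilbertSeries a *
              ((∏ i' ∈ s, Polynomial.aeval (MvPolynomial.X i') ((q i').reverse) :
                MvPolynomial (Fin r) K) : MvPowerSeries (Fin r) K)) *
            ((Polynomial.aeval (MvPolynomial.X i) ((q i).reverse) :
              MvPolynomial (Fin r) K) : MvPowerSeries (Fin r) K) := by
        rw [Finset.prod_insert hi]
        push_cast
        ring
      set Φ : MvPowerSeries (Fin r) K := hilbertSeries a *
        ((∏ i' ∈ s, Polynomial.aeval (MvPolynomial.X i') ((q i').reverse) :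
          MvPolynomial (Fin r) K) : MvPowerSeries (Fin r) K) with hΦdef
      rw [hΦ]
      set D := (q i).natDegree with hD
      have hrevc : ∀ k, k ≤ D → ((q i).reverse).coeff k = (q i).coeff (D - k) := fun k hk => by
        rw [Polynomial.coeff_reverse, Polynomial.revAt_le hk]
      have hrevz : ∀ k, D < k → ((q i).reverse).coeff k = 0 := fun k hk => by
        rw [Polynomial.coeff_reverse, Polynomial.revAt_eq_self_of_lt hk,
          Polynomial.coeff_eq_zero_of_natDegree_lt hk]
      constructor
      · -- recurrence preserved for j ∉ insert i s
        intro j hj m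
        have hji : j ≠ i := fun h => hj (h ▸ Finset.mem_insert_self i s)
        have hjs : j ∉ s := fun h => hj (Finset.mem_insert_of_mem h)
        have hcoord : ∀ k : ℕ, (m + Finsupp.single j k) i = m i := by
          intro k
          rw [Finsupp.add_apply, Finsupp.single_apply, if_neg hji, add_zero]
        calc ∑ k ∈ Finset.range ((q j).natDegree + 1), (q j).coeff k *
              MvPowerSeries.coeff (m + Finsupp.single j k)
                (Φ * ((Polynomial.aeval (MvPolynomial.X i) ((q i).reverse) :
                  MvPolynomial (Fin r) K) : MvPowerSeries (Fin r) K))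
            = ∑ k ∈ Finset.range ((q j).natDegree + 1), ∑ l ∈ Finset.range (m i + 1),
                ((q i).reverse).coeff l * ((q j).coeff k *
                  MvPowerSeries.coeff ((m - Finsupp.single i l) + Finsupp.single j k) Φ) := by
              refine Finset.sum_congr rfl fun k _ => ?_
              rw [coeff_mul_aeval, hcoord, Finset.mul_sum]
              refine Finset.sum_congr rfl fun l _ => ?_
              have harg : (m + Finsupp.single j k) - Finsupp.single i l
                  = (m - Finsupp.single i l) + Finsupp.single j k := by
                ext t
                simp only [Finsupp.tsub_apply, Finsupp.add_apply, Finsupp.single_apply]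
                split_ifs <;> (try simp_all) <;> omega
              rw [harg]
              ring
          _ = ∑ l ∈ Finset.range (m i + 1), ((q i).reverse).coeff l *
                ∑ k ∈ Finset.range ((q j).natDegree + 1), (q j).coeff k *
                  MvPowerSeries.coeff ((m - Finsupp.single i l) + Finsupp.single j k) Φ := by
              rw [Finset.sum_comm]
              exact Finset.sum_congr rfl fun l _ => by rw [Finset.mul_sum]
          _ = 0 := by
              refine Finset.sum_eq_zero fun l _ => ?_
              rw [ih.1 j hjs (m - Finsupp.single i l), mul_zero]
      · -- vanishing
        intro n hn
        obtain ⟨i', hi', hni'⟩ := hn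
        rw [coeff_mul_aeval]
        rcases Finset.mem_insert.mp hi' with heq | hi's
        · -- i' = i : use the recurrence for Φ in coordinate i
          rw [heq] at hni'
          have hDn : D < n i := hni'
          have e1 : ∑ k ∈ Finset.range (n i + 1), ((q i).reverse).coeff k *
                MvPowerSeries.coeff (n - Finsupp.single i k) Φ
              = ∑ k ∈ Finset.range (D + 1), ((q i).reverse).coeff k *
                MvPowerSeries.coeff (n - Finsupp.single i k) Φ := by
            refine (Finset.sum_subset (Finset.range_subset_range.2 (by omega)) fun k _ hk => ?_).symm
            rw [hrevz k (by rw [Finset.mem_range, not_lt] at hk; omega), zero_mul]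
          rw [e1]
          have e2 : ∀ k ∈ Finset.range (D + 1), ((q i).reverse).coeff k *
                MvPowerSeries.coeff (n - Finsupp.single i k) Φ
              = (q i).coeff (D - k) *
                MvPowerSeries.coeff (n - Finsupp.single i k) Φ := fun k hk => by
            rw [hrevc k (by rw [Finset.mem_range] at hk; omega)]
          rw [Finset.sum_congr rfl e2, ← Finset.sum_range_reflect]
          have e3 : ∀ k ∈ Finset.range (D + 1),
              (q i).coeff (D - (D + 1 - 1 - k)) *
                MvPowerSeries.coeff (n - Finsupp.single i (D + 1 - 1 - k)) Φ
              = (q i).coeff k *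
                MvPowerSeries.coeff ((n - Finsupp.single i D) + Finsupp.single i k) Φ := by
            intro k hk
            rw [Finset.mem_range] at hk
            have hk' : k ≤ D := by omega
            have harg : n - Finsupp.single i (D + 1 - 1 - k)
                = (n - Finsupp.single i D) + Finsupp.single i k := by
              ext t
              simp only [Finsupp.tsub_apply, Finsupp.add_apply, Finsupp.single_apply]
              split_ifs <;> (try simp_all) <;> omega
            rw [harg]
            congr 2
            omega
          rw [Finset.sum_congr rfl e3]
          exact ih.1 i hi (n - Finsupp.single i D)
        · -- i' ∈ s : every shifted coefficient of Φ vanishes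
          refine Finset.sum_eq_zero fun k _ => ?_
          have : (n - Finsupp.single i k) i' = n i' := by
            rw [Finsupp.tsub_apply, Finsupp.single_apply,
              if_neg (fun h : i = i' => hi (h.symm ▸ hi's)), Nat.sub_zero]
          rw [ih.2 (n - Finsupp.single i k) ⟨i', hi's, by omega⟩, mul_zero]

end Aux

/-- if for each coordinate `i` the span of the shifts `S_iⁿ a` is
finite-dimensional, then `H_a · Q₁(t₁)⋯Q_r(t_r)` is a polynomial for suitable
single-variable polynomials `Qᵢ` with nonzero constant terms. -/
theorem coordinate_shifts_finiteDimensional_imp_rational_sep_denominator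
    {K : Type*} [Field K] {r : ℕ} (hr : 1 ≤ r) (a : (Fin r → ℕ) → K)
    (h : ∀ i : Fin r, FiniteDimensional K (Submodule.span K
      (Set.range fun n : ℕ => mshift a (Pi.single i n)))) :
    ∃ (P : MvPolynomial (Fin r) K) (Q : Fin r → Polynomial K),
      (∀ i, (Q i).coeff 0 ≠ 0) ∧
      hilbertSeries a *
        (((∏ i, Polynomial.aeval (MvPolynomial.X i) (Q i)) : MvPolynomial (Fin r) K) :
          MvPowerSeries (Fin r) K) = (P : MvPowerSeries (Fin r) K) := by
  classical
  choose q hq0 hqrec using fun i => exists_recurrence a i (h i)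
  -- recurrence at the Finsupp level
  have hrec : ∀ (j : Fin r) (m : Fin r →₀ ℕ),
      ∑ k ∈ Finset.range ((q j).natDegree + 1),
        (q j).coeff k * MvPowerSeries.coeff (m + Finsupp.single j k) (hilbertSeries a) = 0 := by
    intro j m
    have := hqrec j (⇑m)
    rw [← this]
    refine Finset.sum_congr rfl fun k _ => ?_
    congr 1
    show a ⇑(m + Finsupp.single j k) = a (⇑m + Pi.single j k)
    congr 1
    rw [Finsupp.coe_add, Finsupp.single_eq_pi_single]
  obtain ⟨hrecΦ, hvan⟩ := key_induction a q hrec Finset.univ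
  set Φ : MvPowerSeries (Fin r) K := hilbertSeries a *
    ((∏ i ∈ Finset.univ, Polynomial.aeval (MvPolynomial.X i) ((q i).reverse) :
      MvPolynomial (Fin r) K) : MvPowerSeries (Fin r) K) with hΦdef
  set P : MvPolynomial (Fin r) K :=
    ∑ d ∈ Fintype.piFinset (fun i => Finset.range ((q i).natDegree + 1)),
      MvPolynomial.monomial (Finsupp.equivFunOnFinite.symm d)
        (MvPowerSeries.coeff (Finsupp.equivFunOnFinite.symm d) Φ) with hP
  refine ⟨P, fun i => (q i).reverse, fun i => ?_, ?_⟩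
  · rw [Polynomial.coeff_zero_reverse]
    exact Polynomial.leadingCoeff_ne_zero.mpr (hq0 i)
  · apply MvPowerSeries.ext
    intro n
    have hcoeffP : MvPowerSeries.coeff n (P : MvPowerSeries (Fin r) K)
        = ∑ d ∈ Fintype.piFinset (fun i => Finset.range ((q i).natDegree + 1)),
            (if Finsupp.equivFunOnFinite.symm d = n
              then MvPowerSeries.coeff (Finsupp.equivFunOnFinite.symm d) Φ else 0) := by
      rw [MvPolynomial.coeff_coe, hP, MvPolynomial.coeff_sum]
      exact Finset.sum_congr rfl fun d _ => MvPolynomial.coeff_monomial _ _ _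
    have hLHS : MvPowerSeries.coeff n (hilbertSeries a *
        (((∏ i, Polynomial.aeval (MvPolynomial.X i) ((q i).reverse)) : MvPolynomial (Fin r) K) :
          MvPowerSeries (Fin r) K)) = MvPowerSeries.coeff n Φ := rfl
    rw [hLHS, hcoeffP]
    by_cases hbox : ∀ i, n i ≤ (q i).natDegree
    · have hmem : ⇑n ∈ Fintype.piFinset (fun i => Finset.range ((q i).natDegree + 1)) := by
        rw [Fintype.mem_piFinset]
        intro i
        rw [Finset.mem_range]
        exact Nat.lt_succ_of_le (hbox i)
      rw [Finset.sum_eq_single_of_mem (⇑n) hmem]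
      · rw [if_pos (Finsupp.equivFunOnFinite_symm_coe n), Finsupp.equivFunOnFinite_symm_coe]
      · intro d _ hdn
        rw [if_neg]
        intro hd
        apply hdn
        have : d = Finsupp.equivFunOnFinite n := by
          rw [← hd, Equiv.apply_symm_apply]
        rw [this]
        rfl
    · push_neg at hbox
      obtain ⟨i, hi⟩ := hbox
      rw [Finset.sum_eq_zero, hvan n ⟨i, Finset.mem_univ i, by omega⟩]
      intro d hd
      rw [if_neg]
      intro hdn
      have hdcoe : d = ⇑n := by
        have : d = Finsupp.equivFunOnFinite n := by rw [← hdn, Equiv.apply_symm_apply]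
        rw [this]; rfl
      rw [Fintype.mem_piFinset] at hd
      have := hd i
      rw [hdcoe, Finset.mem_range] at this
      omega
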